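/- arXiv:1805.02928 — 2 statements merged into one kernel-verified Lean document; each statement's English description precedes it below -/
import Mathlib

section
/- Define G_s(Y) = U_s(Y) ∫_Y^{Y₀} U_s(Y₁)^{-2} dY₁ for Y>0. Then ∂_Y( U_s² ∂_Y(G_s/U_s) ) = 0 for Y>0, G_s extends continuously to Y=0 with G_s(0) = 1/U_s'(0), and ‖G_s/(1+Y)‖_{L^∞(0,∞)} + ‖∂_Y G_s / log Y‖_{L^∞(0,1/2]} + ‖∂_Y G_s‖_{L^∞([1/2,∞))} < ∞. -/
open MeasureTheory Set Filter

noncomputable section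

/-- The function `G_s(Y) = U_s(Y) ∫_Y^{Y₀} U_s(Y₁)^{-2} dY₁`. -/
def Gs (Us : ℝ → ℝ) (Y₀ : ℝ) (Y : ℝ) : ℝ :=
  Us Y * ∫ t in Y..Y₀, (Us t) ^ (-2 : ℤ)

set_option maxHeartbeats 1000000 in
/-- `∂_Y (U_s² ∂_Y (G_s/U_s)) = 0` on `(0,∞)`, `G_s` extends continuously
to `Y=0` with value `1/U_s'(0)`, and `G_s/(1+Y) ∈ L^∞(0,∞)`,
`∂_Y G_s / log Y ∈ L^∞((0,1/2])`, `∂_Y G_s ∈ L^∞([1/2,∞))`. -/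
theorem Gs_properties
    (Us : ℝ → ℝ) (UE Y₀ : ℝ)
    (hUsC2 : ContDiff ℝ 2 Us)
    (hUs0 : Us 0 = 0)
    (hUspos : ∀ Y : ℝ, 0 < Y → 0 < Us Y)
    (hUEpos : 0 < UE)
    (hUslim : Tendsto Us atTop (nhds UE))
    (hUs'0 : 0 < deriv Us 0)
    (hUsdecay : ∃ M : ℝ, ∀ Y : ℝ, 0 ≤ Y →
      (1 + Y) ^ 3 * (|deriv Us Y| + |deriv (deriv Us) Y|) ≤ M)
    (hY₀pos : 0 < Y₀) (hY₀le : Y₀ ≤ 1)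
    (hY₀mono : ∀ Y ∈ Icc (0:ℝ) (4 * Y₀), 0 < deriv Us Y) :
    (∀ Y ∈ Ioi (0:ℝ),
      HasDerivAt (fun Z : ℝ => (Us Z) ^ 2 * deriv (fun W : ℝ => Gs Us Y₀ W / Us W) Z) 0 Y) ∧
    Tendsto (Gs Us Y₀) (nhdsWithin 0 (Ioi 0)) (nhds (1 / deriv Us 0)) ∧
    (∃ M : ℝ, 0 < M ∧
      (∀ Y ∈ Ioi (0:ℝ), |Gs Us Y₀ Y| / (1 + Y) ≤ M) ∧
      (∀ Y ∈ Ioc (0:ℝ) (1/2), |deriv (Gs Us Y₀) Y / Real.log Y| ≤ M) ∧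
      (∀ Y ∈ Ici (1/2 : ℝ), |deriv (Gs Us Y₀) Y| ≤ M)) := by
  obtain ⟨M₀, hM₀⟩ := hUsdecay
  have hM₀0 : 0 ≤ M₀ := le_trans (by positivity) (hM₀ 0 le_rfl)
  have hUsCont : Continuous Us := hUsC2.continuous
  have hdiffUs : Differentiable ℝ Us := hUsC2.differentiable (by norm_num)
  have hD : ∀ x : ℝ, HasDerivAt Us (deriv Us x) x := fun x => (hdiffUs x).hasDerivAt
  have hC1 : ContDiff ℝ 1 (deriv Us) := by
    have : ContDiff ℝ (1+1) Us := by norm_num; exact hUsC2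
    exact (contDiff_succ_iff_deriv.mp this).2.2
  have hU'cont : Continuous (deriv Us) := hC1.continuous
  have hU'diff : Differentiable ℝ (deriv Us) := hC1.differentiable one_ne_zero
  -- derivative bounds
  have hU'le : ∀ t : ℝ, 0 ≤ t → (1+t)^3 * |deriv Us t| ≤ M₀ := by
    intro t ht
    refine le_trans ?_ (hM₀ t ht)
    have h1 : (0:ℝ) < (1+t)^3 := by positivity
    nlinarith [abs_nonneg (deriv (deriv Us) t)]
  have hU'leM : ∀ t : ℝ, 0 ≤ t → |deriv Us t| ≤ M₀ := by
    intro t ht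
    have h := hU'le t ht
    have h1 : (1:ℝ) ≤ (1+t)^3 := one_le_pow₀ (by linarith)
    nlinarith [abs_nonneg (deriv Us t)]
  have hU''le : ∀ t : ℝ, 0 ≤ t → |deriv (deriv Us) t| ≤ M₀ := by
    intro t ht
    have := hM₀ t ht
    have h1 : (1:ℝ) ≤ (1+t)^3 := one_le_pow₀ (by linarith)
    nlinarith [abs_nonneg (deriv Us t), abs_nonneg (deriv (deriv Us) t)]
  -- Lipschitz bound for deriv Us on [0,∞)
  have hLip : ∀ a b : ℝ, 0 ≤ a → a ≤ b → |deriv Us b - deriv Us a| ≤ M₀ * (b - a) := by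
    intro a b ha hab
    rcases eq_or_lt_of_le hab with rfl | hlt
    · simp
    obtain ⟨ξ, hξ, hξ'⟩ := exists_hasDerivAt_eq_slope (deriv Us) (deriv (deriv Us)) hlt
      (hU'cont.continuousOn) (fun x _ => (hU'diff x).hasDerivAt)
    have hξ0 : 0 ≤ ξ := le_of_lt (lt_of_le_of_lt ha hξ.1)
    have := hU''le ξ hξ0
    rw [hξ'] at this
    rw [abs_div] at this
    have hba : |b - a| = b - a := abs_of_pos (by linarith)
    rw [hba] at this
    rw [div_le_iff₀ (by linarith : (0:ℝ) < b - a)] at this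
    linarith
  -- min/max of deriv Us on [0,Y₀]
  have hY₀sub : Icc (0:ℝ) Y₀ ⊆ Icc (0:ℝ) (4*Y₀) := Icc_subset_Icc le_rfl (by linarith)
  obtain ⟨tc, htc, htcmin⟩ := isCompact_Icc.exists_isMinOn (α := ℝ) (s := Icc (0:ℝ) Y₀)
    (nonempty_Icc.mpr (le_of_lt hY₀pos)) (hU'cont.continuousOn)
  set c : ℝ := deriv Us tc with hcdef
  have hc0 : 0 < c := hY₀mono tc (hY₀sub htc)
  have hcle : ∀ t ∈ Icc (0:ℝ) Y₀, c ≤ deriv Us t := fun t ht => htcmin ht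
  -- lower bound Us t ≥ c t on (0, Y₀]
  have hUslb : ∀ t ∈ Ioc (0:ℝ) Y₀, c * t ≤ Us t := by
    intro t ht
    obtain ⟨ξ, hξ, hξ'⟩ := exists_hasDerivAt_eq_slope Us (deriv Us) ht.1
      (hUsCont.continuousOn) (fun x _ => hD x)
    have hξm : ξ ∈ Icc (0:ℝ) Y₀ := ⟨le_of_lt hξ.1, le_trans (le_of_lt hξ.2) ht.2⟩
    have := hcle ξ hξm
    rw [hξ', hUs0, sub_zero, sub_zero] at this
    calc c * t ≤ (Us t / t) * t := by
          apply mul_le_mul_of_nonneg_right this (le_of_lt ht.1)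
      _ = Us t := div_mul_cancel₀ _ (ne_of_gt ht.1)
  -- upper bound Us t ≤ M₀ t on [0,∞)
  have hUsub : ∀ t : ℝ, 0 ≤ t → Us t ≤ M₀ * t := by
    intro t ht
    rcases eq_or_lt_of_le ht with rfl | hlt
    · simp [hUs0]
    obtain ⟨ξ, hξ, hξ'⟩ := exists_hasDerivAt_eq_slope Us (deriv Us) hlt
      (hUsCont.continuousOn) (fun x _ => hD x)
    have := hU'leM ξ (le_of_lt hξ.1)
    rw [hξ', hUs0, sub_zero, sub_zero] at this
    have h2 : Us t / t ≤ M₀ := le_trans (le_abs_self _) this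
    calc Us t = (Us t / t) * t := (div_mul_cancel₀ _ (ne_of_gt hlt)).symm
      _ ≤ M₀ * t := mul_le_mul_of_nonneg_right h2 (le_of_lt hlt)
  -- lower bound at infinity
  have hlow : ∀ r : ℝ, 0 < r → ∃ m : ℝ, 0 < m ∧ ∀ t : ℝ, r ≤ t → m ≤ Us t := by
    intro r hr
    have hev : ∀ᶠ t in atTop, UE/2 ≤ Us t := by
      have := hUslim (Ioi_mem_nhds (show UE/2 < UE by linarith))
      filter_upwards [this] with t ht using le_of_lt ht
    obtain ⟨A, hA⟩ := eventually_atTop.mp hev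
    set A' := max A r with hA'def
    obtain ⟨t₀, ht₀, ht₀min⟩ := isCompact_Icc.exists_isMinOn (α := ℝ) (s := Icc r A')
      (nonempty_Icc.mpr (le_max_right A r)) (hUsCont.continuousOn)
    have ht₀pos : 0 < Us t₀ := hUspos t₀ (lt_of_lt_of_le hr ht₀.1)
    refine ⟨min (UE/2) (Us t₀), lt_min (by linarith) ht₀pos, fun t htr => ?_⟩
    rcases le_or_gt t A' with h | h
    · exact le_trans (min_le_right _ _) (ht₀min ⟨htr, h⟩)
    · exact le_trans (min_le_left _ _) (hA t (le_trans (le_max_left A r) (le_of_lt h)))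
  -- global upper bound for Us on [0,∞)
  obtain ⟨B, hB0, hBle⟩ : ∃ B : ℝ, 0 < B ∧ ∀ t : ℝ, 0 ≤ t → Us t ≤ B := by
    have hev : ∀ᶠ t in atTop, Us t ≤ UE + 1 := by
      have := hUslim (Iio_mem_nhds (show UE < UE + 1 by linarith))
      filter_upwards [this] with t ht using le_of_lt ht
    obtain ⟨A, hA⟩ := eventually_atTop.mp hev
    set A' := max A 0 with hA'def
    obtain ⟨t₀, ht₀, ht₀max⟩ := isCompact_Icc.exists_isMaxOn (α := ℝ) (s := Icc 0 A')
      (nonempty_Icc.mpr (le_max_right A 0)) (hUsCont.continuousOn)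
    refine ⟨max (UE + 1) (Us t₀) + 1, by positivity, fun t htr => ?_⟩
    rcases le_or_gt t A' with h | h
    · have := ht₀max ⟨htr, h⟩
      have h2 : Us t ≤ Us t₀ := this
      calc Us t ≤ Us t₀ := h2
        _ ≤ max (UE+1) (Us t₀) + 1 := by
            have := le_max_right (UE+1) (Us t₀); linarith
    · have := hA t (le_trans (le_max_left A 0) (le_of_lt h))
      have h2 := le_max_left (UE+1) (Us t₀); linarith
  -- integrand facts
  set f : ℝ → ℝ := fun t => (Us t)^(-2:ℤ) with hfdef
  have hfcont : ∀ t : ℝ, 0 < t → ContinuousAt f t := by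
    intro t ht
    exact (hUsCont.continuousAt).zpow₀ _ (Or.inl (ne_of_gt (hUspos t ht)))
  have hfcontOn : ContinuousOn f (Ioi 0) := fun t ht => (hfcont t ht).continuousWithinAt
  have hsub : ∀ a b : ℝ, 0 < a → 0 < b → uIcc a b ⊆ Ioi (0:ℝ) := by
    intro a b ha hb x hx
    exact lt_of_lt_of_le (lt_min ha hb) hx.1
  have hInt : ∀ a b : ℝ, 0 < a → 0 < b → IntervalIntegrable f volume a b := fun a b ha hb =>
    (hfcontOn.mono (hsub a b ha hb)).intervalIntegrable
  have hfmeas : ∀ Y : ℝ, 0 < Y → StronglyMeasurableAtFilter f (nhds Y) volume :=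
    fun Y hY => ContinuousOn.stronglyMeasurableAtFilter isOpen_Ioi hfcontOn Y hY
  have hfpos : ∀ t : ℝ, 0 < t → 0 < f t := by
    intro t ht
    have := hUspos t ht
    simp only [hfdef]
    positivity
  -- FTC : derivative of the integral
  have hIderiv : ∀ Y : ℝ, 0 < Y →
      HasDerivAt (fun W => ∫ t in W..Y₀, f t) (-f Y) Y := fun Y hY =>
    intervalIntegral.integral_hasDerivAt_left (hInt Y Y₀ hY hY₀pos) (hfmeas Y hY) (hfcont Y hY)
  -- derivative of Gs
  have hGderiv : ∀ Y : ℝ, 0 < Y →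
      HasDerivAt (Gs Us Y₀) (deriv Us Y * (∫ t in Y..Y₀, f t) - (Us Y)⁻¹) Y := by
    intro Y hY
    have h := (hD Y).mul (hIderiv Y hY)
    have he : Us Y * -f Y = -(Us Y)⁻¹ := by
      have hne : Us Y ≠ 0 := ne_of_gt (hUspos Y hY)
      have h2 : (Us Y:ℝ)^(-2:ℤ) = (Us Y * Us Y)⁻¹ := by rw [zpow_neg, zpow_two]
      simp only [hfdef]
      rw [h2, mul_neg, mul_inv, ← mul_assoc, mul_inv_cancel₀ hne, one_mul]
    rw [he] at h
    rw [sub_eq_add_neg]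
    exact h
  -- FTC identity : ∫ Us'/Us² = 1/Us a - 1/Us b
  have hFTCid : ∀ a b : ℝ, 0 < a → 0 < b →
      ∫ t in a..b, deriv Us t * f t = (Us a)⁻¹ - (Us b)⁻¹ := by
    intro a b ha hb
    have hderiv : ∀ t ∈ uIcc a b, HasDerivAt (fun s => -(Us s)⁻¹) (deriv Us t * f t) t := by
      intro t ht
      have ht0 : 0 < t := hsub a b ha hb ht
      have hne : Us t ≠ 0 := ne_of_gt (hUspos t ht0)
      have h := ((hD t).inv hne).neg
      refine h.congr_deriv ?_
      simp only [hfdef]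
      rw [zpow_neg, zpow_two]
      ring
    have hint : IntervalIntegrable (fun t => deriv Us t * f t) volume a b := by
      apply ContinuousOn.intervalIntegrable
      exact (hU'cont.continuousOn.mul (hfcontOn.mono (hsub a b ha hb)))
    have := intervalIntegral.integral_eq_sub_of_hasDerivAt hderiv hint
    rw [this]
    ring
  -- bounds away from zero
  set mr := min Y₀ (1/2 : ℝ) with hmrdef
  obtain ⟨m, hm0, hmle⟩ := hlow mr (lt_min hY₀pos (by norm_num))
  have hmr0 : 0 < mr := lt_min hY₀pos (by norm_num)
  have hfle : ∀ x : ℝ, mr ≤ x → f x ≤ (m^2)⁻¹ := by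
    intro x hx
    have h1 : m ≤ Us x := hmle x hx
    have h2 : (0:ℝ) < m^2 := by positivity
    simp only [hfdef]
    rw [zpow_neg, zpow_two]
    have h3 : m^2 ≤ Us x * Us x := by nlinarith
    calc (Us x * Us x)⁻¹ ≤ (m^2)⁻¹ := by
          apply inv_anti₀ h2 h3
      _ = (m^2)⁻¹ := rfl
  have hIbnd : ∀ Y : ℝ, mr ≤ Y → |∫ t in Y..Y₀, f t| ≤ (m^2)⁻¹ * |Y₀ - Y| := by
    intro Y hY
    have hb : ∀ x ∈ Set.uIoc Y Y₀, ‖f x‖ ≤ (m^2)⁻¹ := by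
      intro x hx
      have hxlb : min Y Y₀ < x := hx.1
      have hmrx : mr ≤ x := by
        refine le_of_lt (lt_of_le_of_lt (le_min ?_ ?_) hxlb)
        · exact hY
        · exact min_le_left _ _
      have hx0 : 0 < x := lt_of_lt_of_le hmr0 hmrx
      rw [Real.norm_eq_abs, abs_of_pos (hfpos x hx0)]
      exact hfle x hmrx
    have := intervalIntegral.norm_integral_le_of_norm_le_const hb
    rw [Real.norm_eq_abs] at this
    exact this
  -- splitting the integral
  have hmul_int : ∀ Y : ℝ, 0 < Y → IntervalIntegrable (fun t => deriv Us t * f t) volume Y Y₀ := by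
    intro Y hY
    apply ContinuousOn.intervalIntegrable
    exact (hU'cont.continuousOn.mul (hfcontOn.mono (hsub Y Y₀ hY hY₀pos)))
  have hsplit : ∀ Y : ℝ, 0 < Y → ∀ d : ℝ,
      ∫ t in Y..Y₀, (d - deriv Us t) * f t
        = d * (∫ t in Y..Y₀, f t) - ((Us Y)⁻¹ - (Us Y₀)⁻¹) := by
    intro Y hY d
    have h1 : ∫ t in Y..Y₀, (d - deriv Us t) * f t
        = (∫ t in Y..Y₀, d * f t) - ∫ t in Y..Y₀, deriv Us t * f t := by
      rw [← intervalIntegral.integral_sub ((hInt Y Y₀ hY hY₀pos).const_mul d) (hmul_int Y hY)]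
      congr 1
      ext t
      ring
    rw [h1, intervalIntegral.integral_const_mul, hFTCid Y Y₀ hY hY₀pos]
  -- the key logarithmic estimate
  have hest : ∀ Y : ℝ, Y ∈ Ioc (0:ℝ) Y₀ → ∀ d : ℝ,
      (∀ t ∈ Icc Y Y₀, |d - deriv Us t| ≤ M₀ * t) →
      |d * (∫ t in Y..Y₀, f t) - ((Us Y)⁻¹ - (Us Y₀)⁻¹)|
        ≤ (M₀/c^2) * (Real.log Y₀ - Real.log Y) := by
    intro Y hY d hd
    rw [← hsplit Y hY.1 d]
    have huIcc : uIcc Y Y₀ ⊆ Ioi (0:ℝ) := hsub Y Y₀ hY.1 hY₀pos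
    have hae : ∀ᵐ t ∂(volume.restrict (Set.uIoc Y Y₀)), ‖(d - deriv Us t) * f t‖ ≤ (M₀/c^2) * t⁻¹ := by
      rw [uIoc_of_le hY.2]
      filter_upwards [ae_restrict_mem measurableSet_Ioc] with t ht
      have ht0 : 0 < t := lt_trans hY.1 ht.1
      have htY : t ∈ Icc Y Y₀ := ⟨le_of_lt ht.1, ht.2⟩
      have hUst : c * t ≤ Us t := hUslb t ⟨ht0, ht.2⟩
      have hUst0 : 0 < Us t := hUspos t ht0
      have hfb : f t ≤ (c^2 * t^2)⁻¹ := by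
        simp only [hfdef]
        rw [zpow_neg, zpow_two]
        apply inv_anti₀ (by positivity)
        have h5 : (c*t)*(c*t) ≤ Us t * Us t :=
          mul_le_mul hUst hUst (by positivity) (le_of_lt hUst0)
        nlinarith
      rw [Real.norm_eq_abs, abs_mul, abs_of_pos (hfpos t ht0)]
      calc |d - deriv Us t| * f t ≤ (M₀ * t) * (c^2 * t^2)⁻¹ := by
            apply mul_le_mul (hd t htY) hfb (le_of_lt (hfpos t ht0))
            positivity
        _ = (M₀/c^2) * t⁻¹ := by
            field_simp
    have hgi : IntervalIntegrable (fun t : ℝ => (M₀/c^2) * t⁻¹) volume Y Y₀ := by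
      apply ContinuousOn.intervalIntegrable
      apply ContinuousOn.mul continuousOn_const
      apply ContinuousOn.inv₀ (continuousOn_id.mono huIcc)
      intro t ht
      exact ne_of_gt (huIcc ht)
    have h2 := intervalIntegral.norm_integral_le_of_norm_le hY.2
      ((ae_restrict_iff' measurableSet_Ioc).mp (by rwa [uIoc_of_le hY.2] at hae)) hgi
    rw [Real.norm_eq_abs] at h2
    refine le_trans h2 ?_
    have h0uIcc : (0:ℝ) ∉ uIcc Y Y₀ := fun h => lt_irrefl 0 (by simpa using huIcc h)
    have h3 : ∫ t in Y..Y₀, (M₀/c^2) * t⁻¹ = (M₀/c^2) * Real.log (Y₀ / Y) := by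
      rw [intervalIntegral.integral_const_mul, integral_inv h0uIcc]
    rw [h3, Real.log_div (ne_of_gt hY₀pos) (ne_of_gt hY.1)]
  refine ⟨?_, ?_, ?_⟩
  · -- Part 1
    intro Y hY
    have hY0 : (0:ℝ) < Y := hY
    have hev : (fun Z : ℝ => (Us Z)^2 * deriv (fun W => Gs Us Y₀ W / Us W) Z)
        =ᶠ[nhds Y] fun _ => (-1 : ℝ) := by
      filter_upwards [eventually_gt_nhds hY0] with Z hZ
      have hloc : (fun W => Gs Us Y₀ W / Us W) =ᶠ[nhds Z] (fun W => ∫ t in W..Y₀, f t) := by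
        filter_upwards [eventually_gt_nhds hZ] with W hW
        have hne' : Us W ≠ 0 := ne_of_gt (hUspos W hW)
        simp only [Gs]
        rw [mul_comm, mul_div_assoc, div_self hne', mul_one]
      have hd1 : deriv (fun W => Gs Us Y₀ W / Us W) Z = -f Z := by
        rw [hloc.deriv_eq]
        exact (hIderiv Z hZ).deriv
      rw [hd1]
      have hne' : Us Z ≠ 0 := ne_of_gt (hUspos Z hZ)
      simp only [hfdef]
      rw [zpow_neg, zpow_two]
      field_simp
    exact (hasDerivAt_const Y (-1:ℝ)).congr_of_eventuallyEq hev
  · -- Part 2 (limit at 0)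
    set d0 := deriv Us 0 with hd0def
    have hd0 : 0 < d0 := hUs'0
    have hUsY₀pos : 0 < Us Y₀ := hUspos Y₀ hY₀pos
    set φ : ℝ → ℝ := fun Y => (M₀ * Y)/(d0 * Us Y₀)
      + (M₀*Y/d0) * ((M₀/c^2) * (Real.log Y₀ - Real.log Y)) with hφdef
    have hbound : ∀ Y ∈ Ioc (0:ℝ) Y₀, |Gs Us Y₀ Y - 1/d0| ≤ φ Y := by
      intro Y hY
      have hYpos := hY.1
      have hUsY := hUspos Y hYpos
      have hUsYub := hUsub Y (le_of_lt hYpos)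
      have hd' : ∀ t ∈ Icc Y Y₀, |d0 - deriv Us t| ≤ M₀ * t := by
        intro t ht
        have ht0 : 0 ≤ t := le_trans (le_of_lt hYpos) ht.1
        have h := hLip 0 t le_rfl ht0
        rw [abs_sub_comm]
        simpa using h
      have hE := hest Y hY d0 hd'
      set IY := ∫ t in Y..Y₀, f t with hIYdef
      set E := d0 * IY - ((Us Y)⁻¹ - (Us Y₀)⁻¹) with hEdef
      have hK0 : 0 ≤ Real.log Y₀ - Real.log Y := by
        have := Real.log_le_log hYpos hY.2; linarith
      have hGseq : Gs Us Y₀ Y - 1/d0 = (Us Y/d0) * E - Us Y/(d0 * Us Y₀) := by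
        show Us Y * IY - 1/d0 = (Us Y/d0) * E - Us Y/(d0 * Us Y₀)
        rw [hEdef]
        field_simp
        ring
      rw [hGseq]
      have h1 : |(Us Y/d0) * E - Us Y/(d0 * Us Y₀)|
          ≤ |(Us Y/d0) * E| + |Us Y/(d0 * Us Y₀)| := by
        rw [sub_eq_add_neg]
        refine le_trans (abs_add_le _ _) ?_
        rw [abs_neg]
      refine le_trans h1 ?_
      have h2 : |(Us Y/d0) * E| ≤ (M₀*Y/d0) * ((M₀/c^2) * (Real.log Y₀ - Real.log Y)) := by
        rw [abs_mul, abs_of_pos (by positivity : (0:ℝ) < Us Y/d0)]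
        apply mul_le_mul _ hE (abs_nonneg _) (by positivity)
        apply div_le_div_of_nonneg_right hUsYub hd0.le  -- careful: name
      have h3 : |Us Y/(d0 * Us Y₀)| ≤ (M₀ * Y)/(d0 * Us Y₀) := by
        rw [abs_of_pos (by positivity)]
        apply div_le_div_of_nonneg_right hUsYub (by positivity)
      simp only [hφdef]
      linarith
    have h1 : Tendsto (fun Y : ℝ => Real.log Y * Y) (nhdsWithin 0 (Ioi 0)) (nhds 0) := by
      have := tendsto_log_mul_rpow_nhdsGT_zero (one_pos)  -- namespace check
      simpa using this
    have h2 : Tendsto (fun Y : ℝ => Y) (nhdsWithin 0 (Ioi 0)) (nhds (0:ℝ)) :=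
      tendsto_id.mono_left nhdsWithin_le_nhds
    have hφ0 : Tendsto φ (nhdsWithin 0 (Ioi 0)) (nhds 0) := by
      have hφeq : φ = fun Y => (M₀/(d0 * Us Y₀)) * Y
          + ((M₀*M₀/(d0*c^2)) * Real.log Y₀) * Y - (M₀*M₀/(d0*c^2)) * (Real.log Y * Y) := by
        funext Y
        simp only [hφdef]
        field_simp
        ring
      rw [hφeq]
      have := (((h2.const_mul (M₀/(d0 * Us Y₀))).add
        (h2.const_mul ((M₀*M₀/(d0*c^2)) * Real.log Y₀))).sub
        (h1.const_mul (M₀*M₀/(d0*c^2))))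
      simpa using this
    rw [tendsto_iff_dist_tendsto_zero]
    refine squeeze_zero' (Eventually.of_forall (fun Y => dist_nonneg)) ?_ hφ0
    filter_upwards [Ioc_mem_nhdsGT_of_mem (⟨le_rfl, hY₀pos⟩ : (0:ℝ) ∈ Ico 0 Y₀)] with Y hY
    rw [Real.dist_eq]
    exact hbound Y hY
  · -- Part 3 (bounds)
    have hUsY₀pos : 0 < Us Y₀ := hUspos Y₀ hY₀pos
    have hlog2 : 0 < Real.log 2 := Real.log_pos (by norm_num)
    set K5 : ℝ := M₀*(m^2)⁻¹ + m⁻¹ with hK5def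
    have hK5 : 0 < K5 := by positivity
    set a3 : ℝ := (Us Y₀)⁻¹/Real.log 2 with ha3def
    set a4 : ℝ := K5/Real.log 2 with ha4def
    set Mf : ℝ := c⁻¹ + B*(m^2)⁻¹ + (M₀/c^2) + a3 + a4 + K5 + 1 with hMfdef
    have ht1 : 0 ≤ B*(m^2)⁻¹ := by positivity
    have ht2 : 0 ≤ M₀/c^2 := by positivity
    have ht3 : 0 ≤ a3 := by positivity
    have ht4 : 0 ≤ a4 := by positivity
    have ht5 : 0 ≤ c⁻¹ := by positivity
    have hMf0 : 0 < Mf := by positivity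
    have hmrY₀ : mr ≤ Y₀ := min_le_left _ _
    -- a reusable inverse bound
    have hinvle : ∀ Y : ℝ, mr ≤ Y → (Us Y)⁻¹ ≤ m⁻¹ := by
      intro Y hYm
      exact inv_anti₀ hm0 (hmle Y hYm)
    refine ⟨Mf, hMf0, ?_, ?_, ?_⟩
    · -- Gs bound
      intro Y hY
      have hY0 : (0:ℝ) < Y := hY
      have h1Y : (0:ℝ) < 1 + Y := by linarith
      rcases le_or_gt Y Y₀ with hle | hgt
      · have hUsY := hUspos Y hY0
        have hInonneg : 0 ≤ ∫ t in Y..Y₀, f t :=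
          intervalIntegral.integral_nonneg hle
            (fun t ht => le_of_lt (hfpos t (lt_of_lt_of_le hY0 ht.1)))
        have hIle : (∫ t in Y..Y₀, f t) ≤ c⁻¹ * ((Us Y)⁻¹ - (Us Y₀)⁻¹) := by
          have hpt : ∀ t ∈ Icc Y Y₀, f t ≤ c⁻¹ * (deriv Us t * f t) := by
            intro t ht
            have ht0 : 0 < t := lt_of_lt_of_le hY0 ht.1
            have hft := hfpos t ht0
            have hct := hcle t ⟨le_of_lt ht0, ht.2⟩
            have h5 : c * f t ≤ deriv Us t * f t :=
              mul_le_mul_of_nonneg_right hct hft.le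
            calc f t = c⁻¹ * (c * f t) := by field_simp
              _ ≤ c⁻¹ * (deriv Us t * f t) :=
                  mul_le_mul_of_nonneg_left h5 (by positivity)
          have h6 := intervalIntegral.integral_mono_on hle (hInt Y Y₀ hY0 hY₀pos)
              ((hmul_int Y hY0).const_mul c⁻¹) hpt
          rwa [intervalIntegral.integral_const_mul, hFTCid Y Y₀ hY0 hY₀pos] at h6
        have hGle : Gs Us Y₀ Y ≤ c⁻¹ := by
          have h2 : Gs Us Y₀ Y ≤ Us Y * (c⁻¹ * ((Us Y)⁻¹ - (Us Y₀)⁻¹)) :=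
            mul_le_mul_of_nonneg_left hIle hUsY.le
          have e1 : Us Y * (Us Y)⁻¹ = 1 := mul_inv_cancel₀ (ne_of_gt hUsY)
          have e2 : 0 ≤ Us Y * (Us Y₀)⁻¹ := by positivity
          nlinarith
        have hGnn : 0 ≤ Gs Us Y₀ Y := mul_nonneg hUsY.le hInonneg
        rw [abs_of_nonneg hGnn]
        have h7 : Gs Us Y₀ Y / (1+Y) ≤ Gs Us Y₀ Y := div_le_self hGnn (by linarith)
        have hK50 := hK5.le
        linarith
      · have hmrY : mr ≤ Y := le_trans hmrY₀ hgt.le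
        have hI := hIbnd Y hmrY
        have habsG : |Gs Us Y₀ Y| ≤ B * ((m^2)⁻¹ * |Y₀ - Y|) := by
          show |Us Y * ∫ t in Y..Y₀, f t| ≤ _
          rw [abs_mul]
          apply mul_le_mul _ hI (abs_nonneg _) hB0.le
          rw [abs_of_pos (hUspos Y hY0)]
          exact hBle Y hY0.le
        have habs2 : |Y₀ - Y| ≤ 1 + Y := by
          rw [abs_of_nonpos (by linarith)]
          linarith
        rw [div_le_iff₀ h1Y]
        have h8 : B * ((m^2)⁻¹ * |Y₀ - Y|) ≤ B * ((m^2)⁻¹ * (1+Y)) := by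
          apply mul_le_mul_of_nonneg_left _ hB0.le
          apply mul_le_mul_of_nonneg_left habs2 (by positivity)
        have h9 : B * ((m^2)⁻¹ * (1+Y)) ≤ Mf * (1+Y) := by
          have : B * (m^2)⁻¹ ≤ Mf := by
            have hK50 := hK5.le
            linarith
          nlinarith
        exact le_trans habsG (le_trans h8 h9)
    · -- deriv bound on (0,1/2]
      intro Y hY
      have hY0 : (0:ℝ) < Y := hY.1
      have hYle : Y ≤ 1/2 := hY.2
      have hlogY : Real.log 2 ≤ -Real.log Y := by
        have h := Real.log_le_log hY0 hYle
        rw [show (1:ℝ)/2 = 2⁻¹ by norm_num, Real.log_inv] at h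
        linarith
      have hlogYpos : 0 < -Real.log Y := lt_of_lt_of_le hlog2 hlogY
      have hdG := (hGderiv Y hY0).deriv
      set L : ℝ := -Real.log Y with hLdef
      -- claim: |deriv Gs Y| ≤ ((Us Y₀)⁻¹ + K5) + (M₀/c^2) * L
      have claim : |deriv (Gs Us Y₀) Y| ≤ ((Us Y₀)⁻¹ + K5) + (M₀/c^2) * L := by
        rcases le_or_gt Y Y₀ with hle | hgt
        · have hd' : ∀ t ∈ Icc Y Y₀, |deriv Us Y - deriv Us t| ≤ M₀ * t := by
            intro t ht
            have h := hLip Y t hY0.le ht.1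
            rw [abs_sub_comm]
            have ht0 : 0 ≤ t := le_trans hY0.le ht.1
            refine le_trans h ?_
            nlinarith
          have hE := hest Y ⟨hY0, hle⟩ (deriv Us Y) hd'
          have heq : deriv (Gs Us Y₀) Y
              = (deriv Us Y * (∫ t in Y..Y₀, f t) - ((Us Y)⁻¹ - (Us Y₀)⁻¹)) - (Us Y₀)⁻¹ := by
            rw [hdG]; ring
          rw [heq]
          have h1 : |(deriv Us Y * (∫ t in Y..Y₀, f t) - ((Us Y)⁻¹ - (Us Y₀)⁻¹)) - (Us Y₀)⁻¹|
              ≤ |deriv Us Y * (∫ t in Y..Y₀, f t) - ((Us Y)⁻¹ - (Us Y₀)⁻¹)| + |(Us Y₀)⁻¹| := by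
            rw [sub_eq_add_neg]
            refine le_trans (abs_add_le _ _) ?_
            rw [abs_neg]
          have hlY₀ : Real.log Y₀ ≤ 0 := Real.log_nonpos hY₀pos.le hY₀le
          have h2 : (M₀/c^2) * (Real.log Y₀ - Real.log Y) ≤ (M₀/c^2) * L := by
            apply mul_le_mul_of_nonneg_left _ ht2
            simp only [hLdef]
            linarith
          have h3 : |(Us Y₀:ℝ)⁻¹| = (Us Y₀)⁻¹ := abs_of_pos (by positivity)
          have hK50 := hK5.le
          linarith [le_trans hE h2, h1]
        · have hmrY : mr ≤ Y := le_trans hmrY₀ hgt.le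
          have hI := hIbnd Y hmrY
          have habs2 : |Y₀ - Y| ≤ 1 := by
            rw [abs_of_nonpos (by linarith)]
            linarith
          rw [hdG]
          have h1 : |deriv Us Y * (∫ t in Y..Y₀, f t) - (Us Y)⁻¹|
              ≤ |deriv Us Y * (∫ t in Y..Y₀, f t)| + |(Us Y:ℝ)⁻¹| := by
            rw [sub_eq_add_neg]
            refine le_trans (abs_add_le _ _) ?_
            rw [abs_neg]
          have h2 : |deriv Us Y * (∫ t in Y..Y₀, f t)| ≤ M₀ * (m^2)⁻¹ := by
            rw [abs_mul]
            calc |deriv Us Y| * |∫ t in Y..Y₀, f t|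
                ≤ M₀ * ((m^2)⁻¹ * |Y₀ - Y|) :=
                  mul_le_mul (hU'leM Y hY0.le) hI (abs_nonneg _) hM₀0
              _ = (M₀ * (m^2)⁻¹) * |Y₀ - Y| := by ring
              _ ≤ (M₀ * (m^2)⁻¹) * 1 := by
                  apply mul_le_mul_of_nonneg_left habs2
                  exact mul_nonneg hM₀0 (by positivity)
              _ = M₀ * (m^2)⁻¹ := by ring
          have h3 : |(Us Y:ℝ)⁻¹| ≤ m⁻¹ := by
            rw [abs_of_pos (by exact inv_pos.mpr (hUspos Y hY0))]
            exact hinvle Y hmrY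
          have h4 : (0:ℝ) ≤ (M₀/c^2) * L := mul_nonneg ht2 hlogYpos.le
          have h5 : (0:ℝ) ≤ (Us Y₀)⁻¹ := by positivity
          have h7 : |deriv Us Y * (∫ t in Y..Y₀, f t) - (Us Y)⁻¹| ≤ K5 := by
            rw [hK5def]
            exact le_trans h1 (add_le_add h2 h3)
          linarith [h7]
      -- conclude: divide by |log Y|
      rw [abs_div]
      have habslog : |Real.log Y| = L := by
        rw [hLdef, abs_of_nonpos (by linarith)]
      rw [habslog, div_le_iff₀ hlogYpos]
      have e : (a3 + a4) * Real.log 2 = (Us Y₀)⁻¹ + K5 := by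
        simp only [ha3def, ha4def]
        field_simp
      have p1 : (a3 + a4) * Real.log 2 ≤ (a3 + a4) * L :=
        mul_le_mul_of_nonneg_left hlogY (by positivity)
      have p2 : 0 ≤ (Mf - (a3 + a4) - (M₀/c^2)) * L := by
        apply mul_nonneg _ hlogYpos.le
        have hK50 := hK5.le
        linarith
      have expand : Mf * L = (a3 + a4) * L + (M₀/c^2) * L + (Mf - (a3 + a4) - (M₀/c^2)) * L := by
        ring
      have q1 : |deriv (Gs Us Y₀) Y| ≤ (a3 + a4) * Real.log 2 + (M₀/c^2) * L := by
        rw [e]; exact claim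
      have q2 : (a3 + a4) * Real.log 2 + (M₀/c^2) * L ≤ (a3 + a4) * L + (M₀/c^2) * L :=
        add_le_add_left p1 _
      have q3 : (a3 + a4) * L + (M₀/c^2) * L ≤ Mf * L := by
        rw [expand]; linarith [p2]
      exact le_trans q1 (le_trans q2 q3)
    · -- deriv bound on [1/2,∞)
      intro Y hY
      have hY0 : (0:ℝ) < Y := lt_of_lt_of_le (by norm_num) hY
      have hmrY : mr ≤ Y := le_trans (min_le_right _ _) hY
      have hI := hIbnd Y hmrY
      rw [(hGderiv Y hY0).deriv]
      have habsYd : |Y₀ - Y| ≤ 1 + Y := by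
        rcases le_or_gt Y₀ Y with h | h
        · rw [abs_of_nonpos (by linarith)]; linarith
        · rw [abs_of_pos (by linarith)]; linarith
      have h1 : |deriv Us Y * (∫ t in Y..Y₀, f t) - (Us Y)⁻¹|
          ≤ |deriv Us Y * (∫ t in Y..Y₀, f t)| + |(Us Y:ℝ)⁻¹| := by
        rw [sub_eq_add_neg]
        refine le_trans (abs_add_le _ _) ?_
        rw [abs_neg]
      have hdY : |deriv Us Y| * (1 + Y) ≤ M₀ := by
        have h := hU'le Y hY0.le
        have h2 : (1:ℝ) ≤ 1 + Y := by linarith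
        have h3 : (1+Y) ≤ (1+Y)^3 := by nlinarith [sq_nonneg Y, hY0.le]
        have h4 := mul_le_mul_of_nonneg_right h3 (abs_nonneg (deriv Us Y))
        calc |deriv Us Y| * (1+Y) = (1+Y) * |deriv Us Y| := by ring
          _ ≤ (1+Y)^3 * |deriv Us Y| := by linarith [h4]
          _ ≤ M₀ := h
      have h2 : |deriv Us Y * (∫ t in Y..Y₀, f t)| ≤ M₀ * (m^2)⁻¹ := by
        rw [abs_mul]
        calc |deriv Us Y| * |∫ t in Y..Y₀, f t|
            ≤ |deriv Us Y| * ((m^2)⁻¹ * (1 + Y)) := by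
              apply mul_le_mul_of_nonneg_left _ (abs_nonneg _)
              refine le_trans hI ?_
              apply mul_le_mul_of_nonneg_left habsYd (by positivity)
          _ = (|deriv Us Y| * (1 + Y)) * (m^2)⁻¹ := by ring
          _ ≤ M₀ * (m^2)⁻¹ := mul_le_mul_of_nonneg_right hdY (by positivity)
      have h3 : |(Us Y:ℝ)⁻¹| ≤ m⁻¹ := by
        rw [abs_of_pos (by exact inv_pos.mpr (hUspos Y hY0))]
        exact hinvle Y hmrY
      have h7 : |deriv Us Y * (∫ t in Y..Y₀, f t) - (Us Y)⁻¹| ≤ K5 := by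
        rw [hK5def]
        exact le_trans h1 (add_le_add h2 h3)
      have h8 : K5 ≤ Mf := by
        simp only [hMfdef]
        linarith [ht1, ht2, ht3, ht4, ht5]
      exact le_trans h7 h8
end
end

section
/- There exists a constant C > 0 such that for every g ∈ H¹(0,∞;ℂ) one has ‖g‖²_{L²(0,∞)} ≤ C ‖√U_s · g‖^{4/3}_{L²(0,∞)} ‖∂_Y g‖^{2/3}_{L²(0,∞)} + C ‖√U_s · g‖²_{L²(0,∞)}. -/
set_option maxHeartbeats 1000000

open MeasureTheory Set Filter

section AuxiliaryLemmas
open Real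

/-- Pure real optimization lemma. -/
lemma opt_lemma (K N A B : ℝ) (hK : 0 < K) (hN : 0 ≤ N) (hA : 0 ≤ A) (hB : 0 ≤ B)
    (h : ∀ a : ℝ, 0 < a → a ≤ 1/2 → N ≤ K * (A^2 / a) + K * (a^2 * B^2)) :
    N ≤ 8*K * (A ^ ((4:ℝ)/3) * B ^ ((2:ℝ)/3)) + 8*K * A^2 := by
  have hterm1 : 0 ≤ 8*K * (A ^ ((4:ℝ)/3) * B ^ ((2:ℝ)/3)) := by positivity
  have hterm2 : 0 ≤ 8*K * A^2 := by positivity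
  rcases le_or_gt (B^2) (8 * A^2) with hcase | hcase
  · -- use a = 1/2
    have h1 := h (1/2) (by norm_num) le_rfl
    have : N ≤ 8*K*A^2 := by nlinarith
    linarith
  · -- B^2 > 8 A^2, so B > 0
    have hB2 : 0 < B^2 := by nlinarith [sq_nonneg A]
    have hBpos : 0 < B := lt_of_le_of_ne hB fun h0 => by simp [← h0] at hB2
    rcases eq_or_lt_of_le hA with hA0 | hApos
    · -- A = 0 : show N ≤ 0
      have hN0 : N ≤ 0 := by
        by_contra hcon
        push_neg at hcon
        set a := min (1/2) (Real.sqrt (N / (2*K*B^2))) with ha_def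
        have hs : 0 < Real.sqrt (N / (2*K*B^2)) := Real.sqrt_pos.mpr (by positivity)
        have hapos : 0 < a := lt_min (by norm_num) hs
        have hale : a ≤ 1/2 := min_le_left _ _
        have h2 := h a hapos hale
        rw [← hA0] at h2
        simp only [ne_eq, OfNat.ofNat_ne_zero, not_false_iff, zero_pow, zero_div, mul_zero,
          zero_add] at h2
        have ha2 : a^2 ≤ N / (2*K*B^2) := by
          calc a^2 ≤ (Real.sqrt (N / (2*K*B^2)))^2 := by
                apply sq_le_sq' _ (min_le_right _ _)
                linarith [hapos.le, hs.le, min_le_right (1/2 : ℝ) (Real.sqrt (N / (2*K*B^2)))]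
          _ = N / (2*K*B^2) := Real.sq_sqrt (by positivity)
        have hle2 : K * (a^2 * B^2) ≤ K * ((N / (2*K*B^2)) * B^2) :=
          mul_le_mul_of_nonneg_left (mul_le_mul_of_nonneg_right ha2 (sq_nonneg B)) hK.le
        have heq : K * ((N / (2*K*B^2)) * B^2) = N/2 := by field_simp
        rw [heq] at hle2
        linarith
      linarith
    · -- A > 0
      set a := (A / B) ^ ((2:ℝ)/3) with ha_def
      have hABpos : 0 < A / B := div_pos hApos hBpos
      have hapos : 0 < a := Real.rpow_pos_of_pos hABpos _
      have hABlt : A / B < (2:ℝ) ^ (-(3:ℝ)/2) := by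
        have hb : 2 * Real.sqrt 2 * A < B := by
          have hsq : (2 * Real.sqrt 2 * A)^2 < B^2 := by
            have : (Real.sqrt 2)^2 = 2 := Real.sq_sqrt (by norm_num)
            nlinarith
          exact lt_of_pow_lt_pow_left₀ 2 hBpos.le hsq
        have h2s : (2:ℝ) ^ (-(3:ℝ)/2) = 1 / (2 * Real.sqrt 2) := by
          have hs2 : Real.sqrt 2 = (2:ℝ) ^ ((1:ℝ)/2) := Real.sqrt_eq_rpow 2
          rw [hs2]
          rw [show (-(3:ℝ)/2) = -(1 + (1:ℝ)/2) by norm_num, Real.rpow_neg (by norm_num),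
            Real.rpow_add (by norm_num), Real.rpow_one]
          field_simp
        rw [h2s, div_lt_div_iff₀ hBpos (by positivity)]
        nlinarith [Real.sqrt_nonneg 2]
      have hale : a ≤ 1/2 := by
        have : a ≤ ((2:ℝ) ^ (-(3:ℝ)/2)) ^ ((2:ℝ)/3) :=
          Real.rpow_le_rpow hABpos.le hABlt.le (by norm_num)
        have heq : ((2:ℝ) ^ (-(3:ℝ)/2)) ^ ((2:ℝ)/3) = 1/2 := by
          rw [← Real.rpow_mul (by norm_num : (0:ℝ) ≤ 2)]
          norm_num [Real.rpow_neg_one]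
        linarith [heq ▸ this]
      have haval : a = A ^ ((2:ℝ)/3) / B ^ ((2:ℝ)/3) := Real.div_rpow hApos.le hBpos.le _
      have hArp : 0 < A ^ ((2:ℝ)/3) := Real.rpow_pos_of_pos hApos _
      have hBrp : 0 < B ^ ((2:ℝ)/3) := Real.rpow_pos_of_pos hBpos _
      have e1 : K * (A^2 / a) = K * (A ^ ((4:ℝ)/3) * B ^ ((2:ℝ)/3)) := by
        have hA2 : A^2 = A ^ ((4:ℝ)/3) * A ^ ((2:ℝ)/3) := by
          rw [← Real.rpow_add hApos, ← Real.rpow_natCast A 2]; norm_num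
        rw [haval, hA2]
        field_simp
      have e2 : K * (a^2 * B^2) = K * (A ^ ((4:ℝ)/3) * B ^ ((2:ℝ)/3)) := by
        have ha2 : a^2 = A ^ ((4:ℝ)/3) / B ^ ((4:ℝ)/3) := by
          rw [ha_def, ← Real.rpow_natCast ((A/B) ^ ((2:ℝ)/3)) 2,
            ← Real.rpow_mul hABpos.le]
          norm_num
          exact Real.div_rpow hApos.le hBpos.le _
        have hB2 : B^2 = B ^ ((4:ℝ)/3) * B ^ ((2:ℝ)/3) := by
          rw [← Real.rpow_add hBpos, ← Real.rpow_natCast B 2]; norm_num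
        have hBrp4 : 0 < B ^ ((4:ℝ)/3) := Real.rpow_pos_of_pos hBpos _
        rw [ha2, hB2]
        field_simp
      have h3 := h a hapos hale
      rw [e1, e2] at h3
      have : K * (A ^ ((4:ℝ)/3) * B ^ ((2:ℝ)/3)) ≥ 0 := by positivity
      linarith

lemma us_lower_bound (Us : ℝ → ℝ) (UE : ℝ)
    (hcont : Continuous Us)
    (hUspos : ∀ Y : ℝ, 0 < Y → 0 < Us Y)
    (hUEpos : 0 < UE)
    (hUslim : Tendsto Us atTop (nhds UE))
    (hUs0 : Us 0 = 0)
    (hder : HasDerivAt Us (deriv Us 0) 0)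
    (hUs'0 : 0 < deriv Us 0) :
    ∃ c : ℝ, 0 < c ∧ ∀ Y : ℝ, 0 < Y → c * min Y 1 ≤ Us Y := by
  set d := deriv Us 0 with hd
  -- near zero
  have hslope : Tendsto (slope Us 0) (nhdsWithin 0 {(0:ℝ)}ᶜ) (nhds d) :=
    hasDerivAt_iff_tendsto_slope.mp hder
  have hev : ∀ᶠ Y in nhdsWithin 0 {(0:ℝ)}ᶜ, d/2 ≤ slope Us 0 Y :=
    hslope.eventually (eventually_ge_nhds (by linarith))
  rw [eventually_iff, Metric.mem_nhdsWithin_iff] at hev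
  obtain ⟨ε, hεpos, hε⟩ := hev
  set δ : ℝ := min (ε/2) 1 with hδdef
  have hδpos : 0 < δ := lt_min (by linarith) one_pos
  have hδ1 : δ ≤ 1 := min_le_right _ _
  have hnear : ∀ Y : ℝ, 0 < Y → Y ≤ δ → (d/2) * Y ≤ Us Y := by
    intro Y hY hYδ
    have hmem : Y ∈ Metric.ball (0:ℝ) ε ∩ {(0:ℝ)}ᶜ := by
      constructor
      · rw [Metric.mem_ball, Real.dist_eq, sub_zero, abs_of_pos hY]
        calc Y ≤ δ := hYδ
          _ ≤ ε/2 := min_le_left _ _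
          _ < ε := by linarith
      · exact fun h => absurd h hY.ne'
    have := hε hmem
    simp only [mem_setOf_eq, slope_def_field, hUs0] at this
    have h2 : d/2 ≤ Us Y / Y := by
      simpa [div_sub_div_same, sub_zero] using this
    calc (d/2) * Y ≤ (Us Y / Y) * Y := mul_le_mul_of_nonneg_right h2 hY.le
      _ = Us Y := by field_simp
  -- near infinity
  have hfar : ∃ R : ℝ, ∀ Y ≥ R, UE/2 ≤ Us Y := by
    have := hUslim.eventually (eventually_ge_nhds (by linarith : UE/2 < UE))
    exact eventually_atTop.mp this
  obtain ⟨R0, hR0⟩ := hfar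
  set R : ℝ := max R0 (δ + 1) with hRdef
  have hδR : δ ≤ R := by
    have := le_max_right R0 (δ+1); linarith
  -- compact middle
  obtain ⟨x0, hx0mem, hx0min⟩ :=
    (isCompact_Icc (a := δ) (b := R)).exists_isMinOn ⟨δ, by simp [hδR]⟩
      hcont.continuousOn
  set m := Us x0 with hm
  have hmpos : 0 < m := hUspos x0 (lt_of_lt_of_le hδpos hx0mem.1)
  refine ⟨min (d/2) (min m (UE/2)), lt_min (by linarith) (lt_min hmpos (by linarith)), ?_⟩
  intro Y hY
  set c := min (d/2) (min m (UE/2)) with hc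
  have hcpos : 0 < c := lt_min (by linarith) (lt_min hmpos (by linarith))
  rcases le_or_gt Y δ with h1 | h1
  · -- Y ≤ δ : min Y 1 = Y
    have hminY : min Y 1 = Y := min_eq_left (le_trans h1 hδ1)
    rw [hminY]
    calc c * Y ≤ (d/2) * Y := mul_le_mul_of_nonneg_right (min_le_left _ _) hY.le
      _ ≤ Us Y := hnear Y hY h1
  · have hmin1 : min Y 1 ≤ 1 := min_le_right _ _
    have hc1 : c * min Y 1 ≤ c :=
      (mul_le_of_le_one_right hcpos.le hmin1)
    rcases le_or_gt Y R with h2 | h2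
    · have : m ≤ Us Y := hx0min ⟨h1.le, h2⟩
      have hcm : c ≤ m := le_trans (min_le_right _ _) (min_le_left _ _)
      linarith
    · have : UE/2 ≤ Us Y := hR0 Y (le_trans (le_max_left _ _) h2.le)
      have hcu : c ≤ UE/2 := le_trans (min_le_right _ _) (min_le_right _ _)
      linarith

lemma us_upper_bound (Us : ℝ → ℝ) (UE : ℝ)
    (hcont : Continuous Us)
    (hUEpos : 0 < UE)
    (hUslim : Tendsto Us atTop (nhds UE)) :
    ∃ Mb : ℝ, 0 < Mb ∧ ∀ Y : ℝ, 0 ≤ Y → Us Y ≤ Mb := by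
  have hfar : ∃ R : ℝ, ∀ Y ≥ R, Us Y ≤ UE + 1 := by
    have := hUslim.eventually (eventually_le_nhds (by linarith : UE < UE + 1))
    exact eventually_atTop.mp this
  obtain ⟨R0, hR0⟩ := hfar
  set R : ℝ := max R0 0 with hRdef
  obtain ⟨x0, _, hx0max⟩ :=
    (isCompact_Icc (a := (0:ℝ)) (b := R)).exists_isMaxOn ⟨0, ⟨le_rfl, le_max_right R0 0⟩⟩
      hcont.continuousOn
  refine ⟨max (Us x0) (UE + 1), lt_of_lt_of_le (by linarith) (le_max_right _ _), ?_⟩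
  intro Y hY
  rcases le_or_gt Y R with h2 | h2
  · exact le_trans (hx0max ⟨hY, h2⟩) (le_max_left _ _)
  · exact le_trans (hR0 Y (le_trans (le_max_left _ _) h2.le)) (le_max_right _ _)

/-- L² on `Ioi 0` gives integrability of the square of the norm. -/
lemma mem_sq_int {f : ℝ → ℂ} (hf : MemLp f 2 (volume.restrict (Ioi (0:ℝ)))) :
    IntegrableOn (fun Y => ‖f Y‖ ^ 2) (Ioi (0:ℝ)) := by
  have := hf.integrable_norm_rpow (by norm_num) (by norm_num)
  rw [IntegrableOn]
  convert this using 2 with Y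
  rw [ENNReal.toReal_ofNat, ← Real.rpow_natCast ‖f Y‖ 2]
  norm_num

/-- L² restriction to a sub-Ioc is integrable. -/
lemma mem_restrict_Ioc {f : ℝ → ℂ} (hf : MemLp f 2 (volume.restrict (Ioi (0:ℝ))))
    {u v : ℝ} (hu : 0 ≤ u) : MemLp f 2 (volume.restrict (Ioc u v)) := by
  refine hf.mono_measure (Measure.restrict_mono (fun x hx => lt_of_le_of_lt hu hx.1) le_rfl)

lemma int_on_Ioc {f : ℝ → ℂ} (hf : MemLp f 2 (volume.restrict (Ioi (0:ℝ))))
    {u v : ℝ} (hu : 0 ≤ u) : IntegrableOn f (Ioc u v) := by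
  have h2 := mem_restrict_Ioc hf (v := v) hu
  haveI : IsFiniteMeasure (volume.restrict (Ioc u v)) :=
    ⟨by rw [Measure.restrict_apply_univ]; exact measure_Ioc_lt_top⟩
  exact memLp_one_iff_integrable.mp (h2.mono_exponent (by norm_num))

/-- Cauchy–Schwarz for a nonnegative function on an interval. -/
lemma cs_interval {u v : ℝ} (huv : u ≤ v) (f : ℝ → ℝ) (hnn : ∀ x, 0 ≤ f x)
    (hfm : AEStronglyMeasurable f (volume.restrict (Ioc u v)))
    (hf2 : IntegrableOn (fun x => f x ^ 2) (Ioc u v)) :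
    ∫ x in Ioc u v, f x ≤ Real.sqrt (v - u) * Real.sqrt (∫ x in Ioc u v, f x ^ 2) := by
  haveI : IsFiniteMeasure (volume.restrict (Ioc u v)) :=
    ⟨by rw [Measure.restrict_apply_univ]; exact measure_Ioc_lt_top⟩
  have hmem : MemLp f 2 (volume.restrict (Ioc u v)) :=
    (memLp_two_iff_integrable_sq hfm).mpr hf2
  have hone : MemLp (fun _ : ℝ => (1:ℝ)) 2 (volume.restrict (Ioc u v)) := memLp_const 1
  have hpq : Real.HolderConjugate 2 2 := ⟨by norm_num, by norm_num, by norm_num⟩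
  have h := MeasureTheory.integral_mul_le_Lp_mul_Lq_of_nonneg hpq
    (μ := volume.restrict (Ioc u v)) (f := f) (g := fun _ => 1)
    (Filter.Eventually.of_forall hnn) (Filter.Eventually.of_forall fun _ => zero_le_one)
    (by rw [show ENNReal.ofReal 2 = 2 by norm_num [ENNReal.ofReal_ofNat]]; exact hmem)
    (by rw [show ENNReal.ofReal 2 = 2 by norm_num [ENNReal.ofReal_ofNat]]; exact hone)
  simp only [mul_one, one_mul] at h
  have e1 : ∫ x in Ioc u v, f x ^ (2:ℝ) = ∫ x in Ioc u v, f x ^ 2 := by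
    apply setIntegral_congr_fun measurableSet_Ioc
    intro x _
    show f x ^ (2:ℝ) = f x ^ (2:ℕ)
    rw [← Real.rpow_natCast (f x) 2]; norm_num
  have e2 : ∫ _x in Ioc u v, (1:ℝ) ^ (2:ℝ) = v - u := by
    simp [Real.volume_Ioc, ENNReal.toReal_ofReal (by linarith : (0:ℝ) ≤ v - u), huv]
  rw [e1, e2] at h
  calc ∫ x in Ioc u v, f x ≤ (∫ x in Ioc u v, f x ^ 2) ^ ((1:ℝ)/2) * (v-u) ^ ((1:ℝ)/2) := h
    _ = Real.sqrt (v - u) * Real.sqrt (∫ x in Ioc u v, f x ^ 2) := by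
        rw [Real.sqrt_eq_rpow, Real.sqrt_eq_rpow]; ring

end AuxiliaryLemmas

noncomputable section

/-- The `L²` norm on `(0,∞)`. -/
def nrm2 (f : ℝ → ℂ) : ℝ := Real.sqrt (∫ Y in Ioi (0:ℝ), ‖f Y‖ ^ 2)

/-- There is a constant `C > 0` such that for every `g ∈ H¹(0,∞;ℂ)`
(represented by an absolutely continuous `g` with `L²` weak derivative `g1`)
`‖g‖² ≤ C ‖√U_s g‖^{4/3} ‖∂_Y g‖^{2/3} + C ‖√U_s g‖²`. -/
theorem sqrtUs_interpolation_inequality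
    (Us : ℝ → ℝ) (UE : ℝ)
    (hUsC2 : ContDiff ℝ 2 Us)
    (hUs0 : Us 0 = 0)
    (hUspos : ∀ Y : ℝ, 0 < Y → 0 < Us Y)
    (hUEpos : 0 < UE)
    (hUslim : Tendsto Us atTop (nhds UE))
    (hUs'0 : 0 < deriv Us 0)
    (hUsdecay : ∃ M : ℝ, ∀ Y : ℝ, 0 ≤ Y →
      (1 + Y) ^ 3 * (|deriv Us Y| + |deriv (deriv Us) Y|) ≤ M) :
    ∃ C : ℝ, 0 < C ∧
      ∀ g g1 : ℝ → ℂ,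
        MemLp g 2 (volume.restrict (Ioi 0)) →
        MemLp g1 2 (volume.restrict (Ioi 0)) →
        (∀ Y ∈ Ici (0:ℝ), g Y = g 0 + ∫ t in (0:ℝ)..Y, g1 t) →
        nrm2 g ^ 2 ≤
          C * nrm2 (fun Y => (Real.sqrt (Us Y) : ℂ) * g Y) ^ ((4:ℝ)/3)
              * nrm2 g1 ^ ((2:ℝ)/3)
            + C * nrm2 (fun Y => (Real.sqrt (Us Y) : ℂ) * g Y) ^ 2 := by
  have hcont : Continuous Us := hUsC2.continuous
  have hder : HasDerivAt Us (deriv Us 0) 0 :=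
    ((hUsC2.differentiable (by norm_num)) 0).hasDerivAt
  obtain ⟨c, hcpos, hc⟩ := us_lower_bound Us UE hcont hUspos hUEpos hUslim hUs0 hder hUs'0
  obtain ⟨Mb, hMbpos, hMb⟩ := us_upper_bound Us UE hcont hUEpos hUslim
  set K : ℝ := max (3/c) 4 with hKdef
  have hKpos : 0 < K := lt_of_lt_of_le (by norm_num) (le_max_right _ _)
  refine ⟨8*K, by positivity, ?_⟩
  intro g g1 hg hg1 hrep
  set N2 : ℝ := ∫ Y in Ioi (0:ℝ), ‖g Y‖^2 with hN2def
  set A2 : ℝ := ∫ Y in Ioi (0:ℝ), Us Y * ‖g Y‖^2 with hA2def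
  set B2 : ℝ := ∫ Y in Ioi (0:ℝ), ‖g1 Y‖^2 with hB2def
  have hN2nn : 0 ≤ N2 := setIntegral_nonneg measurableSet_Ioi (fun x _ => by positivity)
  have hA2nn : 0 ≤ A2 := setIntegral_nonneg measurableSet_Ioi
    (fun x hx => mul_nonneg (hUspos x hx).le (by positivity))
  have hB2nn : 0 ≤ B2 := setIntegral_nonneg measurableSet_Ioi (fun x _ => by positivity)
  -- integrability facts
  have hNint : IntegrableOn (fun Y => ‖g Y‖^2) (Ioi (0:ℝ)) := mem_sq_int hg
  have hB2int : IntegrableOn (fun Y => ‖g1 Y‖^2) (Ioi (0:ℝ)) := mem_sq_int hg1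
  have hAint : IntegrableOn (fun Y => Us Y * ‖g Y‖^2) (Ioi (0:ℝ)) := by
    apply Integrable.mono' (hNint.const_mul Mb)
    · exact (hcont.aestronglyMeasurable).mul hNint.1
    · filter_upwards [ae_restrict_mem measurableSet_Ioi] with Y hY
      rw [Real.norm_eq_abs, abs_of_nonneg (mul_nonneg (hUspos Y hY).le (by positivity))]
      exact mul_le_mul_of_nonneg_right (hMb Y hY.le) (by positivity)
  -- rewrite the goal norms
  have hgoalA : nrm2 (fun Y => (Real.sqrt (Us Y) : ℂ) * g Y) = Real.sqrt A2 := by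
    unfold nrm2
    congr 1
    apply setIntegral_congr_fun measurableSet_Ioi
    intro Y hY
    show ‖(Real.sqrt (Us Y) : ℂ) * g Y‖^2 = Us Y * ‖g Y‖^2
    rw [norm_mul, mul_pow, Complex.norm_real, Real.norm_eq_abs,
      abs_of_nonneg (Real.sqrt_nonneg _), Real.sq_sqrt (hUspos Y hY).le]
  have hgoalN : nrm2 g ^ 2 = N2 := Real.sq_sqrt hN2nn
  have hgoalB : nrm2 g1 = Real.sqrt B2 := rfl
  rw [hgoalA, hgoalN, hgoalB]
  have key : ∀ a : ℝ, 0 < a → a ≤ 1/2 →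
      N2 ≤ K * ((Real.sqrt A2)^2 / a) + K * (a^2 * (Real.sqrt B2)^2) := by
    intro a hapos hale
    rw [Real.sq_sqrt hA2nn, Real.sq_sqrt hB2nn]
    -- tail bound
    have htail : ∀ u : ℝ, a ≤ u → (∫ Y in Ioi u, ‖g Y‖^2) ≤ A2 / (c*a) := by
      intro u hu
      have hau : 0 < u := lt_of_lt_of_le hapos hu
      rw [le_div_iff₀ (by positivity)]
      have step1 : (∫ Y in Ioi u, ‖g Y‖^2) * (c*a) = ∫ Y in Ioi u, (c*a) * ‖g Y‖^2 := by
        rw [MeasureTheory.integral_const_mul]; ring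
      rw [step1]
      calc ∫ Y in Ioi u, (c*a) * ‖g Y‖^2 ≤ ∫ Y in Ioi u, Us Y * ‖g Y‖^2 := by
            apply setIntegral_mono_on
              ((hNint.mono_set (Ioi_subset_Ioi hau.le)).const_mul (c*a))
              (hAint.mono_set (Ioi_subset_Ioi hau.le)) measurableSet_Ioi
            intro Y hY
            have hYpos : 0 < Y := lt_trans hau hY
            have h1 : a ≤ min Y 1 := le_min (le_trans hu (le_of_lt hY)) (le_trans hale (by norm_num))
            have h2 : c * a ≤ Us Y :=
              le_trans (mul_le_mul_of_nonneg_left h1 hcpos.le) (hc Y hYpos)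
            exact mul_le_mul_of_nonneg_right h2 (by positivity)
        _ ≤ A2 := by
            apply setIntegral_mono_set hAint
            · filter_upwards [ae_restrict_mem measurableSet_Ioi] with Y hY
              exact mul_nonneg (hUspos Y hY).le (by positivity)
            · exact HasSubset.Subset.eventuallyLE (Ioi_subset_Ioi hau.le)
    -- pointwise bound on (0, a]
    set S : ℝ := Real.sqrt A2 / (Real.sqrt c * a) + Real.sqrt (2*a) * Real.sqrt B2 with hSdef
    have hSnn : 0 ≤ S := by positivity
    have hptw : ∀ Y ∈ Ioc (0:ℝ) a, ‖g Y‖ ≤ S := by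
      intro Y hY
      obtain ⟨hY0, hYa⟩ := hY
      -- for each b in [a, 2a]
      have hbbound : ∀ b ∈ Icc a (2*a), ‖g Y‖ ≤ ‖g b‖ + Real.sqrt (2*a) * Real.sqrt B2 := by
        intro b hb
        obtain ⟨hba, hb2a⟩ := hb
        have hYb : Y ≤ b := le_trans hYa hba
        have hb0 : 0 ≤ b := le_trans (le_trans hY0.le hYa) hba
        have hint0b : IntervalIntegrable g1 volume 0 b := by
          rw [intervalIntegrable_iff_integrableOn_Ioc_of_le hb0]
          exact int_on_Ioc hg1 le_rfl
        have hint0Y : IntervalIntegrable g1 volume 0 Y := by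
          rw [intervalIntegrable_iff_integrableOn_Ioc_of_le hY0.le]
          exact int_on_Ioc hg1 le_rfl
        have gdiff : g b - g Y = ∫ t in Y..b, g1 t := by
          rw [hrep b (le_trans hY0.le hYb), hrep Y hY0.le]
          rw [add_sub_add_left_eq_sub]
          exact intervalIntegral.integral_interval_sub_left hint0b hint0Y
        have hnorm : ‖∫ t in Y..b, g1 t‖ ≤ Real.sqrt (2*a) * Real.sqrt B2 := by
          calc ‖∫ t in Y..b, g1 t‖ ≤ ∫ t in Ioc Y b, ‖g1 t‖ := by
                have := intervalIntegral.norm_integral_le_integral_norm_uIoc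
                  (f := g1) (a := Y) (b := b) (μ := volume)
                rwa [uIoc_of_le hYb] at this
            _ ≤ Real.sqrt (b - Y) * Real.sqrt (∫ t in Ioc Y b, ‖g1 t‖^2) := by
                apply cs_interval hYb _ (fun x => norm_nonneg _)
                  ((hg1.1.norm).mono_measure
                    (Measure.restrict_mono (fun x hx => lt_trans hY0 hx.1) le_rfl))
                exact hB2int.mono_set (fun x hx => lt_trans hY0 hx.1)
            _ ≤ Real.sqrt (2*a) * Real.sqrt B2 := by
                apply mul_le_mul
                · apply Real.sqrt_le_sqrt; linarith
                · apply Real.sqrt_le_sqrt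
                  apply setIntegral_mono_set hB2int
                  · filter_upwards with Y; positivity
                  · exact HasSubset.Subset.eventuallyLE (fun x hx => lt_trans hY0 hx.1)
                · exact Real.sqrt_nonneg _
                · exact Real.sqrt_nonneg _
        calc ‖g Y‖ ≤ ‖g b‖ + ‖g b - g Y‖ := by
              have := norm_sub_norm_le (g Y) (g b)
              have h2 := norm_sub_rev (g Y) (g b)
              linarith [norm_sub_norm_le (g Y) (g b), (norm_sub_rev (g Y) (g b)).le]
          _ ≤ ‖g b‖ + Real.sqrt (2*a) * Real.sqrt B2 := by
              rw [gdiff]; linarith [hnorm]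
      -- integrate over b ∈ Ioc a 2a
      have hvol : (volume (Ioc a (2*a))).toReal = a := by
        rw [Real.volume_Ioc, ENNReal.toReal_ofReal (by linarith)]; ring
      have hconst : ∫ _b in Ioc a (2*a), ‖g Y‖ = a * ‖g Y‖ := by
        rw [setIntegral_const, measureReal_def, hvol, smul_eq_mul]
      have hgint : IntegrableOn (fun b => ‖g b‖) (Ioc a (2*a)) := (int_on_Ioc hg hapos.le).norm
      have hmono : a * ‖g Y‖ ≤ ∫ b in Ioc a (2*a), (‖g b‖ + Real.sqrt (2*a) * Real.sqrt B2) := by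
        rw [← hconst]
        apply setIntegral_mono_on
          (integrableOn_const measure_Ioc_lt_top.ne)
          (hgint.add (integrableOn_const measure_Ioc_lt_top.ne))
          measurableSet_Ioc
        intro b hb
        exact hbbound b ⟨hb.1.le, hb.2⟩
      have hsplit : ∫ b in Ioc a (2*a), (‖g b‖ + Real.sqrt (2*a) * Real.sqrt B2)
          = (∫ b in Ioc a (2*a), ‖g b‖) + a * (Real.sqrt (2*a) * Real.sqrt B2) := by
        rw [integral_add hgint (integrableOn_const measure_Ioc_lt_top.ne),
          setIntegral_const, measureReal_def, hvol, smul_eq_mul]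
      have hcs : (∫ b in Ioc a (2*a), ‖g b‖) ≤ Real.sqrt A2 / Real.sqrt c := by
        calc (∫ b in Ioc a (2*a), ‖g b‖)
            ≤ Real.sqrt (2*a - a) * Real.sqrt (∫ b in Ioc a (2*a), ‖g b‖^2) := by
              apply cs_interval (by linarith) _ (fun x => norm_nonneg _)
                ((hg.1.norm).mono_measure
                  (Measure.restrict_mono (fun x hx => lt_trans hapos hx.1) le_rfl))
              exact hNint.mono_set (fun x hx => lt_trans hapos hx.1)
          _ ≤ Real.sqrt a * Real.sqrt (A2 / (c*a)) := by
              apply mul_le_mul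
              · apply Real.sqrt_le_sqrt; linarith
              · apply Real.sqrt_le_sqrt
                refine le_trans ?_ (htail a le_rfl)
                apply setIntegral_mono_set (hNint.mono_set (Ioi_subset_Ioi hapos.le))
                · filter_upwards with Y; positivity
                · exact HasSubset.Subset.eventuallyLE (fun x hx => hx.1)
              · exact Real.sqrt_nonneg _
              · exact Real.sqrt_nonneg _
          _ = Real.sqrt A2 / Real.sqrt c := by
              have hsc : Real.sqrt c ≠ 0 := ne_of_gt (Real.sqrt_pos.mpr hcpos)
              have hsa : Real.sqrt a ≠ 0 := ne_of_gt (Real.sqrt_pos.mpr hapos)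
              rw [Real.sqrt_div hA2nn, Real.sqrt_mul hcpos.le]
              field_simp
      have hfin : a * ‖g Y‖ ≤ Real.sqrt A2 / Real.sqrt c + a * (Real.sqrt (2*a) * Real.sqrt B2) := by
        rw [hsplit] at hmono; linarith
      have ha' : a ≠ 0 := ne_of_gt hapos
      calc ‖g Y‖ = (a * ‖g Y‖)/a := by field_simp
        _ ≤ (Real.sqrt A2 / Real.sqrt c + a * (Real.sqrt (2*a) * Real.sqrt B2))/a := by
            gcongr
        _ = Real.sqrt A2 / (Real.sqrt c * a) + Real.sqrt (2*a) * Real.sqrt B2 := by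
            field_simp
    -- front bound
    have hfront : (∫ Y in Ioc (0:ℝ) a, ‖g Y‖^2) ≤ a * S^2 := by
      calc (∫ Y in Ioc (0:ℝ) a, ‖g Y‖^2) ≤ ∫ _Y in Ioc (0:ℝ) a, S^2 := by
            apply setIntegral_mono_on (hNint.mono_set Ioc_subset_Ioi_self)
              (integrableOn_const measure_Ioc_lt_top.ne) measurableSet_Ioc
            intro Y hY
            exact pow_le_pow_left₀ (norm_nonneg _) (hptw Y hY) 2
        _ = a * S^2 := by
            rw [setIntegral_const, measureReal_def, Real.volume_Ioc, sub_zero, ENNReal.toReal_ofReal hapos.le, smul_eq_mul]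
    have hsplitN : N2 = (∫ Y in Ioc (0:ℝ) a, ‖g Y‖^2) + (∫ Y in Ioi a, ‖g Y‖^2) := by
      rw [hN2def, ← Ioc_union_Ioi_eq_Ioi hapos.le,
        setIntegral_union (Ioc_disjoint_Ioi le_rfl) measurableSet_Ioi
          (hNint.mono_set (by rw [← Ioc_union_Ioi_eq_Ioi hapos.le]; exact subset_union_left))
          (hNint.mono_set (by rw [← Ioc_union_Ioi_eq_Ioi hapos.le]; exact subset_union_right))]
    have hSsq : a * S^2 ≤ 2*(A2/(c*a)) + 4*a^2*B2 := by
      have e1 : (Real.sqrt A2 / (Real.sqrt c * a))^2 = A2/(c*a^2) := by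
        rw [div_pow, mul_pow, Real.sq_sqrt hA2nn, Real.sq_sqrt hcpos.le]
      have e2 : (Real.sqrt (2*a) * Real.sqrt B2)^2 = 2*a*B2 := by
        rw [mul_pow, Real.sq_sqrt (by linarith), Real.sq_sqrt hB2nn]
      have hexp : S^2 ≤ 2*(Real.sqrt A2 / (Real.sqrt c * a))^2
          + 2*(Real.sqrt (2*a) * Real.sqrt B2)^2 := by
        rw [hSdef]
        nlinarith [sq_nonneg (Real.sqrt A2 / (Real.sqrt c * a) - Real.sqrt (2*a) * Real.sqrt B2)]
      rw [e1, e2] at hexp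
      calc a*S^2 ≤ a*(2*(A2/(c*a^2)) + 2*(2*a*B2)) :=
            mul_le_mul_of_nonneg_left hexp hapos.le
        _ = 2*(A2/(c*a)) + 4*a^2*B2 := by field_simp; ring
    have hcomb : N2 ≤ 3*(A2/(c*a)) + 4*a^2*B2 := by
      rw [hsplitN]
      have hh := add_le_add hfront (htail a le_rfl)
      linarith [hSsq]
    have h1 : 3*(A2/(c*a)) ≤ K * (A2/a) := by
      have he : 3*(A2/(c*a)) = (3/c)*(A2/a) := by field_simp
      rw [he]
      exact mul_le_mul_of_nonneg_right (le_max_left _ _) (by positivity)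
    have h2 : 4*a^2*B2 ≤ K*(a^2*B2) := by
      have h4 : (4:ℝ) ≤ K := le_max_right _ _
      have := mul_le_mul_of_nonneg_right h4 (mul_nonneg (sq_nonneg a) hB2nn)
      linarith
    linarith
  have main := opt_lemma K N2 (Real.sqrt A2) (Real.sqrt B2) hKpos hN2nn
    (Real.sqrt_nonneg _) (Real.sqrt_nonneg _) key
  linarith [main]
end
end
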